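/- (Representation of transfer entropy by copula entropies, Eq. (6) of the paper, following Ma 2021.) Let k ≥ 1 and let q be a probability density on ℝ × ℝᵏ × ℝ with coordinates (y′, y, x), where y′ plays the role of y_{i+1}, y of the history y^i, and x of x_i. Assume each one-dimensional marginal density of q has a continuous strictly increasing CDF, and that each of the marginal densities of the blocks (y′,y,x), (y,x), (y′,y) and y admits a copula-density factorization with copula densities c_{y′yx} on [0,1]^{k+2}, c_{yx} on [0,1]^{k+1}, c_{y′y} on [0,1]^{k+1}, c_y on [0,1]^{k} respectively, each with c log c integrable, and that the transfer-entropy integrand is integrable. Then the transfer entropy T := ∫ q(y′,y,x) log( q(y′,y,x) q_Y(y) / ( q_{YX}(y,x) q_{Y′Y}(y′,y) ) ) satisfies T = −H_c(y′, y, x) + H_c(y, x) + H_c(y′, y) − H_c(y), where H_c(·) := −∫ c log c du denotes the copula entropy of the indicated block of variables. -/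

import Mathlib

open MeasureTheory

/-- The unit cube `[0,1]ⁿ` in `ℝⁿ`. -/
def unitCube (n : ℕ) : Set (Fin n → ℝ) := Set.univ.pi fun _ => Set.Icc (0 : ℝ) 1

/-- Copula entropy `H_c = −∫_{[0,1]ⁿ} c log c` of a copula density `c` on `[0,1]ⁿ`. -/
noncomputable def copulaEntropy {n : ℕ} (c : (Fin n → ℝ) → ℝ) : ℝ :=
  -∫ u in unitCube n, c u * Real.log (c u)

/-- `c` is a copula density of the joint density `p` on `ℝⁿ`: there are marginal densities
`mᵢ` of `p` with continuous strictly increasing CDFs `Fᵢ` such that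
`p x = c (F₁ x₁, …, Fₙ xₙ) · ∏ᵢ mᵢ xᵢ` Lebesgue-a.e. (Sklar factorization). -/
def IsCopulaDensityOf {n : ℕ} (p : (Fin n → ℝ) → ℝ) (c : (Fin n → ℝ) → ℝ) : Prop :=
  Measurable c ∧ (∀ u, 0 ≤ c u) ∧
    ∃ (m : Fin n → ℝ → ℝ) (F : Fin n → ℝ → ℝ),
      (∀ i, Measurable (m i)) ∧ (∀ i t, 0 ≤ m i t) ∧ (∀ i, ∫ t, m i t = 1) ∧
      (∀ i x, F i x = ∫ t in Set.Iic x, m i t) ∧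
      (∀ i, Continuous (F i)) ∧ (∀ i, StrictMono (F i)) ∧
      (∀ i, Measure.map (fun x => x i)
          (volume.withDensity fun x => ENNReal.ofReal (p x)) =
        volume.withDensity fun t => ENNReal.ofReal (m i t)) ∧
      (∀ᵐ x : Fin n → ℝ, p x = c (fun i => F i (x i)) * ∏ i, m i (x i))

section TransferEntropyHelpers
open MeasureTheory Set
open scoped ENNReal NNReal


lemma map_withDensity_comp {α β : Type*} [MeasurableSpace α] [MeasurableSpace β]
    (μ : Measure α) {Φ : α → β} (hΦ : Measurable Φ) {g : β → ℝ≥0∞} (hg : Measurable g) :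
    Measure.map Φ (μ.withDensity fun a => g (Φ a)) = (Measure.map Φ μ).withDensity g := by
  ext s hs
  rw [Measure.map_apply hΦ hs, withDensity_apply _ (hΦ hs), withDensity_apply _ hs,
    ← lintegral_indicator (hΦ hs), ← lintegral_indicator hs _, lintegral_map (hg.indicator hs) hΦ]
  exact lintegral_congr fun a => by by_cases h : Φ a ∈ s <;> simp [Set.indicator, h]

lemma lintegral_prod_coord : ∀ (n : ℕ) (g : Fin n → ℝ → ℝ≥0∞), (∀ i, Measurable (g i)) →
    ∫⁻ z : Fin n → ℝ, ∏ i, g i (z i) = ∏ i, ∫⁻ t, g i t := by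
  intro n
  induction n with
  | zero =>
    intro g hg
    simp only [Finset.univ_eq_empty, Finset.prod_empty]
    rw [lintegral_const, one_mul]
    simp [volume_pi, Measure.pi_univ]
  | succ n ih =>
    intro g hg
    set e := MeasurableEquiv.piFinSuccAbove (fun _ : Fin (n+1) => ℝ) 0 with he
    have hmp := MeasureTheory.volume_preserving_piFinSuccAbove (fun _ : Fin (n+1) => ℝ) 0
    have h2 := (hmp.symm e).map_eq
    have key : ∀ p : ℝ × (Fin n → ℝ), ∏ i, g i ((e.symm p) i)
        = g 0 p.1 * ∏ i : Fin n, g i.succ (p.2 i) := by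
      intro p
      rw [Fin.prod_univ_succ]
      simp [he, MeasurableEquiv.piFinSuccAbove]
    calc ∫⁻ z : Fin (n+1) → ℝ, ∏ i, g i (z i)
        = ∫⁻ p : ℝ × (Fin n → ℝ), ∏ i, g i ((e.symm p) i) := by
          rw [← h2, MeasureTheory.lintegral_map_equiv]
      _ = ∫⁻ p : ℝ × (Fin n → ℝ), g 0 p.1 * ∏ i : Fin n, g i.succ (p.2 i)
          ∂((volume : Measure ℝ).prod volume) := by
          rw [← Measure.volume_eq_prod]; exact lintegral_congr key
      _ = (∫⁻ t, g 0 t) * ∫⁻ w : Fin n → ℝ, ∏ i : Fin n, g i.succ (w i) :=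
          lintegral_prod_mul (hg 0).aemeasurable
            (Finset.measurable_prod _ (fun (i : Fin n) _ =>
              (hg i.succ).comp (measurable_pi_apply i))).aemeasurable
      _ = (∫⁻ t, g 0 t) * ∏ i : Fin n, ∫⁻ t, g i.succ t := by
          rw [ih (fun i => g i.succ) (fun i => hg i.succ)]
      _ = ∏ i, ∫⁻ t, g i t := (Fin.prod_univ_succ (fun i => ∫⁻ t, g i t)).symm

lemma pi_withDensity (n : ℕ) (f : Fin n → ℝ → ℝ≥0∞) (hf : ∀ i, Measurable (f i))
    (hsf : ∀ i, SigmaFinite ((volume : Measure ℝ).withDensity (f i))) :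
    Measure.pi (fun i => (volume : Measure ℝ).withDensity (f i))
      = (volume : Measure (Fin n → ℝ)).withDensity (fun z => ∏ i, f i (z i)) := by
  haveI := hsf
  refine Measure.pi_eq (fun s hs => ?_)
  rw [withDensity_apply _ (MeasurableSet.univ_pi hs),
    ← lintegral_indicator (MeasurableSet.univ_pi hs)]
  have : ∀ z : Fin n → ℝ, (Set.univ.pi s).indicator (fun z => ∏ i, f i (z i)) z
      = ∏ i, (s i).indicator (f i) (z i) := by
    intro z
    by_cases h : z ∈ Set.univ.pi s
    · rw [Set.indicator_of_mem h]
      exact Finset.prod_congr rfl fun i _ =>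
        (Set.indicator_of_mem (h i (Set.mem_univ i)) _).symm
    · rw [Set.indicator_of_notMem h]
      rw [Set.mem_pi] at h
      push_neg at h
      obtain ⟨i, _, hi⟩ := h
      exact (Finset.prod_eq_zero (Finset.mem_univ i)
        (by rw [Set.indicator_of_notMem hi])).symm
  rw [lintegral_congr this,
    lintegral_prod_coord n _ (fun i => (hf i).indicator (hs i))]
  exact Finset.prod_congr rfl fun i _ => by
    rw [lintegral_indicator (hs i), withDensity_apply _ (hs i)]

lemma pi_restrict_cube (n : ℕ) :
    Measure.pi (fun _ : Fin n => (volume : Measure ℝ).restrict (Set.Icc 0 1))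
      = (volume : Measure (Fin n → ℝ)).restrict (unitCube n) := by
  refine Measure.pi_eq (fun s hs => ?_)
  rw [Measure.restrict_apply (MeasurableSet.univ_pi hs)]
  rw [unitCube, ← Set.pi_inter_distrib, volume_pi, Measure.pi_pi]
  exact Finset.prod_congr rfl fun i _ => (Measure.restrict_apply (hs i)).symm

lemma cdf_measurePreserving {m : ℝ → ℝ} (hm : Measurable m) (h0 : ∀ t, 0 ≤ m t)
    (h1 : ∫ t, m t = 1) {F : ℝ → ℝ} (hF : ∀ x, F x = ∫ t in Set.Iic x, m t)
    (hFc : Continuous F) (hFm : StrictMono F) :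
    MeasurePreserving F ((volume : Measure ℝ).withDensity fun t => ENNReal.ofReal (m t))
      ((volume : Measure ℝ).restrict (Set.Icc 0 1)) := by
  set ν := (volume : Measure ℝ).withDensity fun t => ENNReal.ofReal (m t) with hν
  have hm_int : Integrable m := by
    by_contra h
    rw [integral_undef h] at h1
    exact one_ne_zero h1.symm
  have hνIic : ∀ x, ν (Set.Iic x) = ENNReal.ofReal (F x) := by
    intro x
    rw [hν, withDensity_apply _ measurableSet_Iic, hF,
      ofReal_integral_eq_lintegral_ofReal hm_int.integrableOn
        (Filter.Eventually.of_forall h0)]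
  have hνuniv : ν Set.univ = 1 := by
    rw [hν, withDensity_apply _ MeasurableSet.univ, Measure.restrict_univ,
      ← ofReal_integral_eq_lintegral_ofReal hm_int (Filter.Eventually.of_forall h0), h1,
      ENNReal.ofReal_one]
  haveI : IsProbabilityMeasure ν := ⟨hνuniv⟩
  have hF01 : ∀ x, 0 < F x ∧ F x ≤ 1 := by
    intro x
    constructor
    · have h1' : 0 ≤ F (x - 1) := by
        rw [hF]; exact setIntegral_nonneg measurableSet_Iic fun t _ => h0 t
      exact lt_of_le_of_lt h1' (hFm (by linarith))
    · rw [hF, ← h1]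
      exact setIntegral_le_integral hm_int (Filter.Eventually.of_forall h0)
  have hsmall : ∀ a : ℝ, 0 < a → ∃ x, F x < a := by
    intro a ha
    by_contra h
    push_neg at h
    have hnull : ν (⋂ i : ℕ, Set.Iic (-(i:ℝ))) = ⨅ i : ℕ, ν (Set.Iic (-(i:ℝ))) := by
      have hA : Antitone (fun i : ℕ => Set.Iic (-(i:ℝ))) := fun i j hij =>
        Set.Iic_subset_Iic.mpr (neg_le_neg (Nat.cast_le.mpr hij))
      exact Directed.measure_iInter
        (fun i => measurableSet_Iic.nullMeasurableSet)
        hA.directed_ge ⟨0, (measure_lt_top ν _).ne⟩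
    have hempty : (⋂ i : ℕ, Set.Iic (-(i:ℝ))) = ∅ := by
      ext t; simp only [Set.mem_iInter, Set.mem_Iic, Set.mem_empty_iff_false, iff_false]
      push_neg
      obtain ⟨i, hi⟩ := exists_nat_gt (-t)
      exact ⟨i, by linarith⟩
    rw [hempty, measure_empty] at hnull
    have : ENNReal.ofReal a ≤ 0 := by
      rw [hnull]
      exact le_iInf fun i => by rw [hνIic]; exact ENNReal.ofReal_le_ofReal (h _)
    simp only [nonpos_iff_eq_zero, ENNReal.ofReal_eq_zero] at this
    linarith
  have hbig : ∀ a : ℝ, a < 1 → ∃ x, a < F x := by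
    intro a ha
    by_contra h
    push_neg at h
    have hcover : (⋃ i : ℕ, Set.Iic ((i:ℝ))) = Set.univ := by
      ext t; simp only [Set.mem_iUnion, Set.mem_Iic, Set.mem_univ, iff_true]
      obtain ⟨i, hi⟩ := exists_nat_gt t
      exact ⟨i, hi.le⟩
    have hsup : ν (⋃ i : ℕ, Set.Iic ((i:ℝ))) = ⨆ i : ℕ, ν (Set.Iic ((i:ℝ))) :=
      Directed.measure_iUnion
        (Monotone.directed_le fun i j hij => Set.Iic_subset_Iic.mpr (Nat.cast_le.mpr hij))
    rw [hcover, hνuniv] at hsup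
    have : (1 : ℝ≥0∞) ≤ ENNReal.ofReal a := by
      rw [hsup]
      exact iSup_le fun i => by rw [hνIic]; exact ENNReal.ofReal_le_ofReal (h _)
    rw [ENNReal.one_le_ofReal] at this
    linarith
  refine ⟨hFc.measurable, ?_⟩
  refine Measure.ext_of_Iic _ _ (fun a => ?_)
  rw [Measure.map_apply hFc.measurable measurableSet_Iic,
    Measure.restrict_apply measurableSet_Iic]
  rcases le_or_gt a 0 with ha | ha
  · have h1' : F ⁻¹' Set.Iic a = ∅ := by
      ext x; simp only [Set.mem_preimage, Set.mem_Iic, Set.mem_empty_iff_false, iff_false,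
        not_le]
      exact lt_of_le_of_lt ha (hF01 x).1
    have h2' : Set.Iic a ∩ Set.Icc 0 1 ⊆ Set.Icc 0 0 := by
      rintro x ⟨hx1, hx2, _⟩
      exact ⟨hx2, le_trans hx1 ha⟩
    rw [h1', measure_empty]
    refine (measure_mono_null h2' ?_).symm
    rw [Real.volume_Icc]; simp
  rcases le_or_gt 1 a with ha1 | ha1
  · have h1' : F ⁻¹' Set.Iic a = Set.univ := by
      ext x; simp only [Set.mem_preimage, Set.mem_Iic, Set.mem_univ, iff_true]
      exact le_trans (hF01 x).2 ha1
    have h2' : Set.Iic a ∩ Set.Icc 0 1 = Set.Icc 0 1 := by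
      rw [Set.inter_eq_right]
      rintro x ⟨hx0, hx1⟩
      exact le_trans hx1 ha1
    rw [h1', h2', hνuniv, Real.volume_Icc]
    simp
  · obtain ⟨x₁, hx₁⟩ := hsmall a ha
    obtain ⟨x₂, hx₂⟩ := hbig a ha1
    have hx12 : x₁ ≤ x₂ := (hFm.lt_iff_lt.mp (lt_trans hx₁ hx₂)).le
    obtain ⟨x₀, _, hx₀⟩ := intermediate_value_Icc hx12 hFc.continuousOn
      ⟨hx₁.le, hx₂.le⟩
    have h1' : F ⁻¹' Set.Iic a = Set.Iic x₀ := by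
      ext x
      simp only [Set.mem_preimage, Set.mem_Iic]
      rw [← hx₀, hFm.le_iff_le]
    have h2' : Set.Iic a ∩ Set.Icc 0 1 = Set.Icc 0 a := by
      ext x
      simp only [Set.mem_inter_iff, Set.mem_Iic, Set.mem_Icc]
      constructor
      · rintro ⟨hx1, hx2, _⟩; exact ⟨hx2, hx1⟩
      · rintro ⟨hx0, hxa⟩; exact ⟨hxa, hx0, le_trans hxa ha1.le⟩
    rw [h1', h2', hνIic, hx₀, Real.volume_Icc]
    simp

lemma map_copula {n : ℕ} {p c : (Fin n → ℝ) → ℝ}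
    {m : Fin n → ℝ → ℝ} {F : Fin n → ℝ → ℝ}
    (hc_meas : Measurable c)
    (hm_meas : ∀ i, Measurable (m i)) (hm_nonneg : ∀ i t, 0 ≤ m i t)
    (hm_one : ∀ i, ∫ t, m i t = 1)
    (hF_def : ∀ i x, F i x = ∫ t in Set.Iic x, m i t)
    (hF_cont : ∀ i, Continuous (F i)) (hF_mono : ∀ i, StrictMono (F i))
    (hfact : ∀ᵐ x : Fin n → ℝ, p x = c (fun i => F i (x i)) * ∏ i, m i (x i)) :
    Measure.map (fun z i => F i (z i)) (volume.withDensity fun z => ENNReal.ofReal (p z))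
      = ((volume : Measure (Fin n → ℝ)).restrict (unitCube n)).withDensity
          (fun u => ENNReal.ofReal (c u)) := by
  have hmp : ∀ i, MeasurePreserving (F i)
      ((volume : Measure ℝ).withDensity fun t => ENNReal.ofReal (m i t))
      ((volume : Measure ℝ).restrict (Set.Icc 0 1)) := fun i =>
    cdf_measurePreserving (hm_meas i) (hm_nonneg i) (hm_one i) (hF_def i)
      (hF_cont i) (hF_mono i)
  have hΦ : Measurable (fun (z : Fin n → ℝ) (i : Fin n) => F i (z i)) :=
    measurable_pi_iff.mpr fun i => ((hF_cont i).measurable).comp (measurable_pi_apply i)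
  have hm_int : ∀ i, Integrable (m i) := by
    intro i
    by_contra h
    have := hm_one i
    rw [integral_undef h] at this
    exact one_ne_zero this.symm
  have hsf : ∀ i, SigmaFinite ((volume : Measure ℝ).withDensity
      fun t => ENNReal.ofReal (m i t)) := by
    intro i
    have : IsFiniteMeasure ((volume : Measure ℝ).withDensity
        fun t => ENNReal.ofReal (m i t)) := by
      constructor
      rw [withDensity_apply _ MeasurableSet.univ, Measure.restrict_univ,
        ← ofReal_integral_eq_lintegral_ofReal (hm_int i)
          (Filter.Eventually.of_forall (hm_nonneg i)), hm_one i]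
      simp
    infer_instance
  have hcongr : (fun z => ENNReal.ofReal (p z))
      =ᵐ[volume] (fun z => (∏ i, ENNReal.ofReal (m i (z i)))
        * ENNReal.ofReal (c (fun i => F i (z i)))) := by
    filter_upwards [hfact] with z hz
    rw [hz, mul_comm, ENNReal.ofReal_mul (Finset.prod_nonneg fun i _ => hm_nonneg i (z i)),
      ENNReal.ofReal_prod_of_nonneg (fun i _ => hm_nonneg i (z i))]
  have step1 : (volume.withDensity fun z => ENNReal.ofReal (p z))
      = ((volume : Measure (Fin n → ℝ)).withDensity
          (fun z => ∏ i, ENNReal.ofReal (m i (z i)))).withDensity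
        (fun z => ENNReal.ofReal (c (fun i => F i (z i)))) := by
    rw [withDensity_congr_ae hcongr, ← withDensity_mul]
    · rfl
    · exact Finset.measurable_prod _ fun (i : Fin n) _ =>
        ((hm_meas i).ennreal_ofReal).comp (measurable_pi_apply i)
    · exact hc_meas.ennreal_ofReal.comp hΦ
  have step2 : (volume : Measure (Fin n → ℝ)).withDensity
      (fun z => ∏ i, ENNReal.ofReal (m i (z i)))
      = Measure.pi (fun i => (volume : Measure ℝ).withDensity
          fun t => ENNReal.ofReal (m i t)) :=
    (pi_withDensity n (fun i t => ENNReal.ofReal (m i t))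
      (fun i => (hm_meas i).ennreal_ofReal) hsf).symm
  have step3 : Measure.map (fun z (i : Fin n) => F i (z i))
      (Measure.pi (fun i => (volume : Measure ℝ).withDensity
        fun t => ENNReal.ofReal (m i t)))
      = (volume : Measure (Fin n → ℝ)).restrict (unitCube n) := by
    rw [(measurePreserving_pi _ _ hmp).map_eq, pi_restrict_cube]
  rw [step1, step2, map_withDensity_comp _ hΦ (hc_meas.ennreal_ofReal), step3]

lemma integral_withDensity_ofReal {α : Type*} [MeasurableSpace α] {μ : Measure α}
    {p : α → ℝ} (hp_nonneg : ∀ a, 0 ≤ p a) (hp_meas : Measurable p) (f : α → ℝ) :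
    ∫ a, f a ∂(μ.withDensity fun a => ENNReal.ofReal (p a)) = ∫ a, p a * f a ∂μ := by
  rw [show (fun a => ENNReal.ofReal (p a)) = (fun a => ((p a).toNNReal : ℝ≥0∞)) from rfl,
    integral_withDensity_eq_integral_smul hp_meas.real_toNNReal f]
  refine integral_congr_ae (Filter.Eventually.of_forall fun a => ?_)
  simp [NNReal.smul_def, Real.coe_toNNReal _ (hp_nonneg a)]

lemma integrable_withDensity_ofReal {α : Type*} [MeasurableSpace α] {μ : Measure α}
    {p : α → ℝ} (hp_nonneg : ∀ a, 0 ≤ p a) (hp_meas : Measurable p) (f : α → ℝ) :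
    Integrable f (μ.withDensity fun a => ENNReal.ofReal (p a))
      ↔ Integrable (fun a => p a * f a) μ := by
  rw [integrable_withDensity_iff hp_meas.ennreal_ofReal
    (Filter.Eventually.of_forall fun a => ENNReal.ofReal_lt_top)]
  refine integrable_congr (Filter.Eventually.of_forall fun a => ?_)
  simp only [ENNReal.toReal_ofReal (hp_nonneg a)]
  rw [mul_comm]

lemma integral_density_map {α β : Type*} [MeasurableSpace α] [MeasurableSpace β]
    {μ : Measure α} {p : α → ℝ} (hp_nonneg : ∀ a, 0 ≤ p a) (hp_meas : Measurable p)
    {π : α → β} (hπ : Measurable π) {ρ : β → ℝ} (hρ_nonneg : ∀ b, 0 ≤ ρ b)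
    (hρ_meas : Measurable ρ) {ν : Measure β}
    (hmap : Measure.map π (μ.withDensity fun a => ENNReal.ofReal (p a))
      = ν.withDensity fun b => ENNReal.ofReal (ρ b))
    {f : β → ℝ} (hf : Measurable f) :
    ∫ a, p a * f (π a) ∂μ = ∫ b, ρ b * f b ∂ν := by
  rw [← integral_withDensity_ofReal hp_nonneg hp_meas (fun a => f (π a)),
    ← integral_withDensity_ofReal hρ_nonneg hρ_meas f, ← hmap,
    integral_map hπ.aemeasurable hf.aestronglyMeasurable]

lemma integrable_density_map {α β : Type*} [MeasurableSpace α] [MeasurableSpace β]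
    {μ : Measure α} {p : α → ℝ} (hp_nonneg : ∀ a, 0 ≤ p a) (hp_meas : Measurable p)
    {π : α → β} (hπ : Measurable π) {ρ : β → ℝ} (hρ_nonneg : ∀ b, 0 ≤ ρ b)
    (hρ_meas : Measurable ρ) {ν : Measure β}
    (hmap : Measure.map π (μ.withDensity fun a => ENNReal.ofReal (p a))
      = ν.withDensity fun b => ENNReal.ofReal (ρ b))
    {f : β → ℝ} (hf : Measurable f) :
    Integrable (fun a => p a * f (π a)) μ ↔ Integrable (fun b => ρ b * f b) ν := by
  rw [← integrable_withDensity_ofReal hp_nonneg hp_meas (fun a => f (π a)),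
    ← integrable_withDensity_ofReal hρ_nonneg hρ_meas f, ← hmap,
    integrable_map_measure hf.aestronglyMeasurable hπ.aemeasurable]
  rfl

lemma ae_comp_proj {n : ℕ} (j : Fin (n+1)) {P : (Fin n → ℝ) → Prop}
    (h : ∀ᵐ w : Fin n → ℝ, P w) :
    ∀ᵐ z : Fin (n+1) → ℝ, P (fun i => z (j.succAbove i)) := by
  set e := MeasurableEquiv.piFinSuccAbove (fun _ : Fin (n+1) => ℝ) j with he
  have hmp := MeasureTheory.volume_preserving_piFinSuccAbove (fun _ : Fin (n+1) => ℝ) j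
  have h2 : ∀ᵐ q : ℝ × (Fin n → ℝ), P q.2 := by
    rw [ae_iff, Measure.volume_eq_prod]
    have hset : {q : ℝ × (Fin n → ℝ) | ¬ P q.2} = Set.univ ×ˢ {w | ¬ P w} := by
      ext q; simp
    rw [hset, Measure.prod_prod]
    rw [ae_iff] at h
    rw [h, mul_zero]
  have h3 : ∀ᵐ z : Fin (n+1) → ℝ, P ((e z).2) := by
    rw [← hmp.map_eq] at h2
    exact ae_of_ae_map (hmp.measurable.aemeasurable) h2
  filter_upwards [h3] with z hz
  exact hz

lemma ae_coord {n : ℕ} (j : Fin (n+1)) {P : ℝ → Prop} (h : ∀ᵐ t : ℝ, P t) :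
    ∀ᵐ z : Fin (n+1) → ℝ, P (z j) := by
  set e := MeasurableEquiv.piFinSuccAbove (fun _ : Fin (n+1) => ℝ) j with he
  have hmp := MeasureTheory.volume_preserving_piFinSuccAbove (fun _ : Fin (n+1) => ℝ) j
  have h2 : ∀ᵐ q : ℝ × (Fin n → ℝ), P q.1 := by
    rw [ae_iff, Measure.volume_eq_prod]
    have hset : {q : ℝ × (Fin n → ℝ) | ¬ P q.1} = {t | ¬ P t} ×ˢ Set.univ := by
      ext q; simp
    rw [hset, Measure.prod_prod]
    rw [ae_iff] at h
    rw [h, zero_mul]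
  have h3 : ∀ᵐ z : Fin (n+1) → ℝ, P ((e z).1) := by
    rw [← hmp.map_eq] at h2
    exact ae_of_ae_map (hmp.measurable.aemeasurable) h2
  filter_upwards [h3] with z hz
  exact hz

lemma ae_comp_succ {n : ℕ} {P : (Fin n → ℝ) → Prop} (h : ∀ᵐ w : Fin n → ℝ, P w) :
    ∀ᵐ z : Fin (n+1) → ℝ, P (fun i => z i.succ) := by
  filter_upwards [ae_comp_proj 0 h] with z hz
  have : (fun i : Fin n => z ((0 : Fin (n+1)).succAbove i)) = fun i => z i.succ := by
    funext i; rw [Fin.succAbove_zero]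
  rwa [this] at hz

lemma ae_comp_castSucc {n : ℕ} {P : (Fin n → ℝ) → Prop} (h : ∀ᵐ w : Fin n → ℝ, P w) :
    ∀ᵐ z : Fin (n+1) → ℝ, P (fun i => z i.castSucc) := by
  filter_upwards [ae_comp_proj (Fin.last n) h] with z hz
  have : (fun i : Fin n => z ((Fin.last n).succAbove i)) = fun i => z i.castSucc := by
    funext i; rw [Fin.succAbove_last]
  rwa [this] at hz

lemma ae_comp_mid {n : ℕ} {P : (Fin n → ℝ) → Prop} (h : ∀ᵐ w : Fin n → ℝ, P w) :
    ∀ᵐ z : Fin (n+2) → ℝ, P (fun i => z i.succ.castSucc) := by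
  have h1 : ∀ᵐ v : Fin (n+1) → ℝ, P (fun i => v i.castSucc) := ae_comp_castSucc h
  have h2 := ae_comp_succ (n := n+1) h1
  filter_upwards [h2] with z hz
  have : (fun i : Fin n => z i.succ.castSucc) = fun i => z i.castSucc.succ := by
    funext i; rw [Fin.succ_castSucc]
  rwa [this]

lemma density_ae_eq {a b : ℝ → ℝ} (ha : Measurable a) (hb : Measurable b)
    (ha0 : ∀ t, 0 ≤ a t) (hb0 : ∀ t, 0 ≤ b t)
    (h : (volume : Measure ℝ).withDensity (fun t => ENNReal.ofReal (a t))
       = volume.withDensity (fun t => ENNReal.ofReal (b t))) : ∀ᵐ t : ℝ, a t = b t := by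
  have h2 := (withDensity_eq_iff_of_sigmaFinite ha.ennreal_ofReal.aemeasurable
    hb.ennreal_ofReal.aemeasurable).mp h
  filter_upwards [h2] with t ht
  have h3 := congrArg ENNReal.toReal ht
  rwa [ENNReal.toReal_ofReal (ha0 t), ENNReal.toReal_ofReal (hb0 t)] at h3

lemma ae_pos_of_marginal {α β : Type*} [MeasurableSpace α] [MeasurableSpace β]
    {μ : Measure α} {pq : α → ℝ} (hpq_meas : Measurable pq) (hpq_nonneg : ∀ a, 0 ≤ pq a)
    {π : α → β} (hπ : Measurable π) {ρ : β → ℝ} (hρ_meas : Measurable ρ)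
    {ν : Measure β}
    (hmap : Measure.map π (μ.withDensity fun a => ENNReal.ofReal (pq a))
      = ν.withDensity fun b => ENNReal.ofReal (ρ b)) :
    ∀ᵐ a ∂μ, ρ (π a) ≤ 0 → pq a = 0 := by
  set S : Set β := {w | ρ w ≤ 0} with hS_def
  have hS : MeasurableSet S := measurableSet_le hρ_meas measurable_const
  have h1 : (μ.withDensity fun a => ENNReal.ofReal (pq a)) (π ⁻¹' S) = 0 := by
    rw [← Measure.map_apply hπ hS, hmap, withDensity_apply _ hS]
    rw [setLIntegral_eq_zero_iff hS hρ_meas.ennreal_ofReal]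
    exact Filter.Eventually.of_forall fun w hw => ENNReal.ofReal_eq_zero.mpr hw
  rw [withDensity_apply _ (hπ hS),
    setLIntegral_eq_zero_iff (hπ hS) hpq_meas.ennreal_ofReal] at h1
  filter_upwards [h1] with a ha hle
  have := ha hle
  rw [ENNReal.ofReal_eq_zero] at this
  exact le_antisymm this (hpq_nonneg a)


end TransferEntropyHelpers

/-- **Transfer entropy in terms of copula entropies (Ma 2021, Eq. (6)).** Let `q` be a
probability density on `ℝ^{k+2}` whose coordinates `(y′, y, x)` are: `y′ = z 0` (playing
the role of `y_{i+1}`), `y = (z 1, …, z k)` (the history `yⁱ`), and `x = z (k+1)`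
(playing the role of `xᵢ`), with block marginal densities `qY, qYX, qY′Y`. If the blocks
`(y′,y,x)`, `(y,x)`, `(y′,y)` and `y` admit copula-density factorizations with copula
densities `cFull, cYX, cY'Y, cY` (each with `c log c` integrable), and the
transfer-entropy integrand is integrable, then the transfer entropy
`T = ∫ q log ( q · qY / (qYX · qY′Y) )` satisfies
`T = −H_c(y′,y,x) + H_c(y,x) + H_c(y′,y) − H_c(y)`. -/

theorem transferEntropy_eq_copulaEntropies
    (k : ℕ) (hk : 1 ≤ k)
    (q : (Fin (k + 2) → ℝ) → ℝ) (hq_meas : Measurable q)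
    (hq_nonneg : ∀ z, 0 ≤ q z) (hq_int : ∫ z, q z = 1)
    (qY : (Fin k → ℝ) → ℝ) (hqY_meas : Measurable qY)
    (qYX : (Fin (k + 1) → ℝ) → ℝ) (hqYX_meas : Measurable qYX)
    (qY'Y : (Fin (k + 1) → ℝ) → ℝ) (hqY'Y_meas : Measurable qY'Y)
    (hqY : Measure.map (fun z (i : Fin k) => z i.succ.castSucc)
        (volume.withDensity fun z => ENNReal.ofReal (q z)) =
      volume.withDensity fun y => ENNReal.ofReal (qY y))
    (hqYX : Measure.map (fun z (i : Fin (k + 1)) => z i.succ)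
        (volume.withDensity fun z => ENNReal.ofReal (q z)) =
      volume.withDensity fun w => ENNReal.ofReal (qYX w))
    (hqY'Y : Measure.map (fun z (i : Fin (k + 1)) => z i.castSucc)
        (volume.withDensity fun z => ENNReal.ofReal (q z)) =
      volume.withDensity fun w => ENNReal.ofReal (qY'Y w))
    (cFull : (Fin (k + 2) → ℝ) → ℝ) (hcFull : IsCopulaDensityOf q cFull)
    (cYX : (Fin (k + 1) → ℝ) → ℝ) (hcYX : IsCopulaDensityOf qYX cYX)
    (cY'Y : (Fin (k + 1) → ℝ) → ℝ) (hcY'Y : IsCopulaDensityOf qY'Y cY'Y)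
    (cY : (Fin k → ℝ) → ℝ) (hcY : IsCopulaDensityOf qY cY)
    (hcFull_int : IntegrableOn (fun u => cFull u * Real.log (cFull u))
      (unitCube (k + 2)) volume)
    (hcYX_int : IntegrableOn (fun u => cYX u * Real.log (cYX u))
      (unitCube (k + 1)) volume)
    (hcY'Y_int : IntegrableOn (fun u => cY'Y u * Real.log (cY'Y u))
      (unitCube (k + 1)) volume)
    (hcY_int : IntegrableOn (fun u => cY u * Real.log (cY u))
      (unitCube k) volume)
    (hT : Integrable (fun z : Fin (k + 2) → ℝ =>
      q z * Real.log (q z * qY (fun i => z i.succ.castSucc) /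
        (qYX (fun i => z i.succ) * qY'Y (fun i => z i.castSucc))))) :
    ∫ z : Fin (k + 2) → ℝ,
        q z * Real.log (q z * qY (fun i => z i.succ.castSucc) /
          (qYX (fun i => z i.succ) * qY'Y (fun i => z i.castSucc))) =
      -copulaEntropy cFull + copulaEntropy cYX + copulaEntropy cY'Y -
        copulaEntropy cY := by
  obtain ⟨hcF_meas, hcF_nonneg, m, F, hm_meas, hm_nonneg, hm_one, hF_def, hF_cont,
    hF_mono, hmarg, hfact⟩ := hcFull
  obtain ⟨hcYX_meas, hcYX_nonneg, mYX, FYX, hmYX_meas, hmYX_nonneg, hmYX_one, hFYX_def,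
    hFYX_cont, hFYX_mono, hmargYX, hfactYX⟩ := hcYX
  obtain ⟨hcY'Y_meas, hcY'Y_nonneg, mY'Y, FY'Y, hmY'Y_meas, hmY'Y_nonneg, hmY'Y_one,
    hFY'Y_def, hFY'Y_cont, hFY'Y_mono, hmargY'Y, hfactY'Y⟩ := hcY'Y
  obtain ⟨hcY_meas, hcY_nonneg, mY, FY, hmY_meas, hmY_nonneg, hmY_one, hFY_def,
    hFY_cont, hFY_mono, hmargY, hfactY⟩ := hcY
  -- projections and their measurability
  have hprojYX : Measurable (fun (z : Fin (k+2) → ℝ) (i : Fin (k+1)) => z i.succ) :=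
    measurable_pi_iff.mpr fun i => measurable_pi_apply _
  have hprojY'Y : Measurable (fun (z : Fin (k+2) → ℝ) (i : Fin (k+1)) => z i.castSucc) :=
    measurable_pi_iff.mpr fun i => measurable_pi_apply _
  have hprojY : Measurable (fun (z : Fin (k+2) → ℝ) (i : Fin k) => z i.succ.castSucc) :=
    measurable_pi_iff.mpr fun i => measurable_pi_apply _
  -- CDF maps and their measurability
  have hΦF : Measurable (fun (z : Fin (k+2) → ℝ) (i : Fin (k+2)) => F i (z i)) :=
    measurable_pi_iff.mpr fun i => ((hF_cont i).measurable).comp (measurable_pi_apply i)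
  have hΦYX : Measurable (fun (w : Fin (k+1) → ℝ) (i : Fin (k+1)) => FYX i (w i)) :=
    measurable_pi_iff.mpr fun i => ((hFYX_cont i).measurable).comp (measurable_pi_apply i)
  have hΦY'Y : Measurable (fun (w : Fin (k+1) → ℝ) (i : Fin (k+1)) => FY'Y i (w i)) :=
    measurable_pi_iff.mpr fun i => ((hFY'Y_cont i).measurable).comp (measurable_pi_apply i)
  have hΦY : Measurable (fun (w : Fin k → ℝ) (i : Fin k) => FY i (w i)) :=
    measurable_pi_iff.mpr fun i => ((hFY_cont i).measurable).comp (measurable_pi_apply i)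
  -- pushforward identities onto the cubes
  have hmapF : Measure.map (fun z (i : Fin (k+2)) => F i (z i))
      (volume.withDensity fun z => ENNReal.ofReal (q z))
      = ((volume : Measure (Fin (k+2) → ℝ)).restrict (unitCube (k+2))).withDensity
          (fun u => ENNReal.ofReal (cFull u)) :=
    map_copula hcF_meas hm_meas hm_nonneg hm_one hF_def hF_cont hF_mono hfact
  have hmapYX : Measure.map (fun (z : Fin (k+2) → ℝ) (i : Fin (k+1)) => FYX i (z i.succ))
      (volume.withDensity fun z => ENNReal.ofReal (q z))
      = ((volume : Measure (Fin (k+1) → ℝ)).restrict (unitCube (k+1))).withDensity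
          (fun u => ENNReal.ofReal (cYX u)) := by
    have hcomp : (fun (z : Fin (k+2) → ℝ) (i : Fin (k+1)) => FYX i (z i.succ))
        = (fun (w : Fin (k+1) → ℝ) (i : Fin (k+1)) => FYX i (w i))
          ∘ (fun (z : Fin (k+2) → ℝ) (i : Fin (k+1)) => z i.succ) := rfl
    rw [hcomp, ← Measure.map_map hΦYX hprojYX, hqYX]
    exact map_copula hcYX_meas hmYX_meas hmYX_nonneg hmYX_one hFYX_def hFYX_cont
      hFYX_mono hfactYX
  have hmapY'Y : Measure.map (fun (z : Fin (k+2) → ℝ) (i : Fin (k+1)) => FY'Y i (z i.castSucc))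
      (volume.withDensity fun z => ENNReal.ofReal (q z))
      = ((volume : Measure (Fin (k+1) → ℝ)).restrict (unitCube (k+1))).withDensity
          (fun u => ENNReal.ofReal (cY'Y u)) := by
    have hcomp : (fun (z : Fin (k+2) → ℝ) (i : Fin (k+1)) => FY'Y i (z i.castSucc))
        = (fun (w : Fin (k+1) → ℝ) (i : Fin (k+1)) => FY'Y i (w i))
          ∘ (fun (z : Fin (k+2) → ℝ) (i : Fin (k+1)) => z i.castSucc) := rfl
    rw [hcomp, ← Measure.map_map hΦY'Y hprojY'Y, hqY'Y]
    exact map_copula hcY'Y_meas hmY'Y_meas hmY'Y_nonneg hmY'Y_one hFY'Y_def hFY'Y_cont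
      hFY'Y_mono hfactY'Y
  have hmapY : Measure.map (fun (z : Fin (k+2) → ℝ) (i : Fin k) => FY i (z i.succ.castSucc))
      (volume.withDensity fun z => ENNReal.ofReal (q z))
      = ((volume : Measure (Fin k → ℝ)).restrict (unitCube k)).withDensity
          (fun u => ENNReal.ofReal (cY u)) := by
    have hcomp : (fun (z : Fin (k+2) → ℝ) (i : Fin k) => FY i (z i.succ.castSucc))
        = (fun (w : Fin k → ℝ) (i : Fin k) => FY i (w i))
          ∘ (fun (z : Fin (k+2) → ℝ) (i : Fin k) => z i.succ.castSucc) := rfl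
    rw [hcomp, ← Measure.map_map hΦY hprojY, hqY]
    exact map_copula hcY_meas hmY_meas hmY_nonneg hmY_one hFY_def hFY_cont hFY_mono hfactY
  -- evaluation of the four integrals
  have hI1 : ∫ z : Fin (k+2) → ℝ, q z * Real.log (cFull (fun i => F i (z i)))
      = ∫ u in unitCube (k+2), cFull u * Real.log (cFull u) :=
    integral_density_map hq_nonneg hq_meas hΦF hcF_nonneg hcF_meas hmapF
      (Real.measurable_log.comp hcF_meas)
  have hI2 : ∫ z : Fin (k+2) → ℝ, q z * Real.log (cY (fun i => FY i (z i.succ.castSucc)))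
      = ∫ u in unitCube k, cY u * Real.log (cY u) :=
    integral_density_map hq_nonneg hq_meas (hΦY.comp hprojY) hcY_nonneg hcY_meas hmapY
      (Real.measurable_log.comp hcY_meas)
  have hI3 : ∫ z : Fin (k+2) → ℝ, q z * Real.log (cYX (fun i => FYX i (z i.succ)))
      = ∫ u in unitCube (k+1), cYX u * Real.log (cYX u) :=
    integral_density_map hq_nonneg hq_meas (hΦYX.comp hprojYX) hcYX_nonneg hcYX_meas
      hmapYX (Real.measurable_log.comp hcYX_meas)
  have hI4 : ∫ z : Fin (k+2) → ℝ, q z * Real.log (cY'Y (fun i => FY'Y i (z i.castSucc)))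
      = ∫ u in unitCube (k+1), cY'Y u * Real.log (cY'Y u) :=
    integral_density_map hq_nonneg hq_meas (hΦY'Y.comp hprojY'Y) hcY'Y_nonneg hcY'Y_meas
      hmapY'Y (Real.measurable_log.comp hcY'Y_meas)
  -- integrability of the four pieces
  have hg1 : Integrable (fun z : Fin (k+2) → ℝ =>
      q z * Real.log (cFull (fun i => F i (z i)))) :=
    (integrable_density_map hq_nonneg hq_meas hΦF hcF_nonneg hcF_meas hmapF
      (Real.measurable_log.comp hcF_meas)).mpr hcFull_int
  have hg2 : Integrable (fun z : Fin (k+2) → ℝ =>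
      q z * Real.log (cY (fun i => FY i (z i.succ.castSucc)))) :=
    (integrable_density_map hq_nonneg hq_meas (hΦY.comp hprojY) hcY_nonneg hcY_meas hmapY
      (Real.measurable_log.comp hcY_meas)).mpr hcY_int
  have hg3 : Integrable (fun z : Fin (k+2) → ℝ =>
      q z * Real.log (cYX (fun i => FYX i (z i.succ)))) :=
    (integrable_density_map hq_nonneg hq_meas (hΦYX.comp hprojYX) hcYX_nonneg hcYX_meas
      hmapYX (Real.measurable_log.comp hcYX_meas)).mpr hcYX_int
  have hg4 : Integrable (fun z : Fin (k+2) → ℝ =>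
      q z * Real.log (cY'Y (fun i => FY'Y i (z i.castSucc)))) :=
    (integrable_density_map hq_nonneg hq_meas (hΦY'Y.comp hprojY'Y) hcY'Y_nonneg
      hcY'Y_meas hmapY'Y (Real.measurable_log.comp hcY'Y_meas)).mpr hcY'Y_int
  -- marginal density consistency, a.e.
  have hmYX_eq : ∀ i : Fin (k+1), ∀ᵐ t : ℝ, mYX i t = m i.succ t := by
    intro i
    refine density_ae_eq (hmYX_meas i) (hm_meas i.succ) (hmYX_nonneg i) (hm_nonneg i.succ) ?_
    rw [← hmargYX i, ← hqYX, Measure.map_map (measurable_pi_apply i) hprojYX]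
    exact hmarg i.succ
  have hmY'Y_eq : ∀ i : Fin (k+1), ∀ᵐ t : ℝ, mY'Y i t = m i.castSucc t := by
    intro i
    refine density_ae_eq (hmY'Y_meas i) (hm_meas i.castSucc) (hmY'Y_nonneg i)
      (hm_nonneg i.castSucc) ?_
    rw [← hmargY'Y i, ← hqY'Y, Measure.map_map (measurable_pi_apply i) hprojY'Y]
    exact hmarg i.castSucc
  have hmY_eq : ∀ i : Fin k, ∀ᵐ t : ℝ, mY i t = m i.succ.castSucc t := by
    intro i
    refine density_ae_eq (hmY_meas i) (hm_meas i.succ.castSucc) (hmY_nonneg i)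
      (hm_nonneg i.succ.castSucc) ?_
    rw [← hmargY i, ← hqY, Measure.map_map (measurable_pi_apply i) hprojY]
    exact hmarg i.succ.castSucc
  -- pull the above back to the full space
  have hmYX_eq' : ∀ᵐ z : Fin (k+2) → ℝ, ∀ i : Fin (k+1), mYX i (z i.succ) = m i.succ (z i.succ) :=
    ae_all_iff.mpr fun i => ae_coord i.succ (hmYX_eq i)
  have hmY'Y_eq' : ∀ᵐ z : Fin (k+2) → ℝ, ∀ i : Fin (k+1),
      mY'Y i (z i.castSucc) = m i.castSucc (z i.castSucc) :=
    ae_all_iff.mpr fun i => ae_coord i.castSucc (hmY'Y_eq i)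
  have hmY_eq' : ∀ᵐ z : Fin (k+2) → ℝ, ∀ i : Fin k,
      mY i (z i.succ.castSucc) = m i.succ.castSucc (z i.succ.castSucc) :=
    ae_all_iff.mpr fun i => ae_coord i.succ.castSucc (hmY_eq i)
  -- pull back factorizations of blocks
  have hfactYX' : ∀ᵐ z : Fin (k+2) → ℝ, qYX (fun i => z i.succ)
      = cYX (fun i => FYX i (z i.succ)) * ∏ i, mYX i (z i.succ) := by
    filter_upwards [ae_comp_succ hfactYX] with z hz
    exact hz
  have hfactY'Y' : ∀ᵐ z : Fin (k+2) → ℝ, qY'Y (fun i => z i.castSucc)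
      = cY'Y (fun i => FY'Y i (z i.castSucc)) * ∏ i, mY'Y i (z i.castSucc) := by
    filter_upwards [ae_comp_castSucc hfactY'Y] with z hz
    exact hz
  have hfactY' : ∀ᵐ z : Fin (k+2) → ℝ, qY (fun i => z i.succ.castSucc)
      = cY (fun i => FY i (z i.succ.castSucc)) * ∏ i, mY i (z i.succ.castSucc) := by
    filter_upwards [ae_comp_mid hfactY] with z hz
    exact hz
  -- positivity of marginals where q is positive
  have hposYX : ∀ᵐ z : Fin (k+2) → ℝ, qYX (fun i => z i.succ) ≤ 0 → q z = 0 :=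
    ae_pos_of_marginal hq_meas hq_nonneg hprojYX hqYX_meas hqYX
  have hposY'Y : ∀ᵐ z : Fin (k+2) → ℝ, qY'Y (fun i => z i.castSucc) ≤ 0 → q z = 0 :=
    ae_pos_of_marginal hq_meas hq_nonneg hprojY'Y hqY'Y_meas hqY'Y
  have hposY : ∀ᵐ z : Fin (k+2) → ℝ, qY (fun i => z i.succ.castSucc) ≤ 0 → q z = 0 :=
    ae_pos_of_marginal hq_meas hq_nonneg hprojY hqY_meas hqY
  -- the pointwise a.e. identity
  have hae : ∀ᵐ z : Fin (k+2) → ℝ,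
      q z * Real.log (q z * qY (fun i => z i.succ.castSucc) /
        (qYX (fun i => z i.succ) * qY'Y (fun i => z i.castSucc)))
      = q z * Real.log (cFull (fun i => F i (z i)))
        + q z * Real.log (cY (fun i => FY i (z i.succ.castSucc)))
        - q z * Real.log (cYX (fun i => FYX i (z i.succ)))
        - q z * Real.log (cY'Y (fun i => FY'Y i (z i.castSucc))) := by
    filter_upwards [hfact, hfactYX', hfactY'Y', hfactY', hmYX_eq', hmY'Y_eq', hmY_eq',
      hposYX, hposY'Y, hposY] with z hzF hzYX hzY'Y hzY hmx hmw hmy hpx hpw hpy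
    by_cases hq0 : q z = 0
    · simp [hq0]
    have hqpos : 0 < q z := lt_of_le_of_ne (hq_nonneg z) (Ne.symm hq0)
    -- rewrite block products in terms of the full marginals
    rw [Finset.prod_congr rfl (fun i _ => hmx i)] at hzYX
    rw [Finset.prod_congr rfl (fun i _ => hmw i)] at hzY'Y
    rw [Finset.prod_congr rfl (fun i _ => hmy i)] at hzY
    -- positivity of all the full marginals
    have hPf_pos : ∀ j : Fin (k+2), 0 < m j (z j) := by
      have hne : (∏ j, m j (z j)) ≠ 0 := by
        intro h
        rw [hzF, h, mul_zero] at hq0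
        exact hq0 rfl
      intro j
      rcases lt_or_eq_of_le (hm_nonneg j (z j)) with h | h
      · exact h
      · exact absurd (Finset.prod_eq_zero (Finset.mem_univ j) h.symm) hne
    have hPYX_pos : 0 < ∏ i : Fin (k+1), m i.succ (z i.succ) :=
      Finset.prod_pos fun i _ => hPf_pos i.succ
    have hPY'Y_pos : 0 < ∏ i : Fin (k+1), m i.castSucc (z i.castSucc) :=
      Finset.prod_pos fun i _ => hPf_pos i.castSucc
    have hPY_pos : 0 < ∏ i : Fin k, m i.succ.castSucc (z i.succ.castSucc) :=
      Finset.prod_pos fun i _ => hPf_pos i.succ.castSucc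
    -- positivity of block densities and copulas
    have hqYX_pos : 0 < qYX (fun i => z i.succ) :=
      lt_of_not_ge fun h => hq0 (hpx h)
    have hqY'Y_pos : 0 < qY'Y (fun i => z i.castSucc) :=
      lt_of_not_ge fun h => hq0 (hpw h)
    have hqY_pos : 0 < qY (fun i => z i.succ.castSucc) :=
      lt_of_not_ge fun h => hq0 (hpy h)
    have hcF_ne : cFull (fun i => F i (z i)) ≠ 0 := by
      intro h
      rw [hzF, h, zero_mul] at hq0
      exact hq0 rfl
    have hcYX_ne : cYX (fun i => FYX i (z i.succ)) ≠ 0 := by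
      intro h
      rw [h, zero_mul] at hzYX
      exact absurd hzYX hqYX_pos.ne'
    have hcY'Y_ne : cY'Y (fun i => FY'Y i (z i.castSucc)) ≠ 0 := by
      intro h
      rw [h, zero_mul] at hzY'Y
      exact absurd hzY'Y hqY'Y_pos.ne'
    have hcY_ne : cY (fun i => FY i (z i.succ.castSucc)) ≠ 0 := by
      intro h
      rw [h, zero_mul] at hzY
      exact absurd hzY hqY_pos.ne'
    -- product splitting identities
    have hPf_split : (∏ j : Fin (k+2), m j (z j))
        = m 0 (z 0) * ∏ i : Fin (k+1), m i.succ (z i.succ) :=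
      Fin.prod_univ_succ (fun j => m j (z j))
    have hPY'Y_split : (∏ i : Fin (k+1), m i.castSucc (z i.castSucc))
        = m 0 (z 0) * ∏ i : Fin k, m i.succ.castSucc (z i.succ.castSucc) := by
      have := Fin.prod_univ_succ (fun i : Fin (k+1) => m i.castSucc (z i.castSucc))
      simpa using this
    -- the argument of the log
    have harg : q z * qY (fun i => z i.succ.castSucc) /
        (qYX (fun i => z i.succ) * qY'Y (fun i => z i.castSucc))
        = cFull (fun i => F i (z i)) * cY (fun i => FY i (z i.succ.castSucc)) /
          (cYX (fun i => FYX i (z i.succ)) * cY'Y (fun i => FY'Y i (z i.castSucc))) := by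
      rw [hzF, hzY, hzYX, hzY'Y, hPf_split, hPY'Y_split]
      have hm0 : m 0 (z 0) ≠ 0 := (hPf_pos 0).ne'
      field_simp
    rw [harg, Real.log_div (mul_ne_zero hcF_ne hcY_ne) (mul_ne_zero hcYX_ne hcY'Y_ne),
      Real.log_mul hcF_ne hcY_ne, Real.log_mul hcYX_ne hcY'Y_ne]
    ring
  -- put it together
  have hg12 : Integrable (fun z : Fin (k+2) → ℝ =>
      q z * Real.log (cFull (fun i => F i (z i)))
      + q z * Real.log (cY (fun i => FY i (z i.succ.castSucc)))) := hg1.add hg2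
  have hg123 : Integrable (fun z : Fin (k+2) → ℝ =>
      q z * Real.log (cFull (fun i => F i (z i)))
      + q z * Real.log (cY (fun i => FY i (z i.succ.castSucc)))
      - q z * Real.log (cYX (fun i => FYX i (z i.succ)))) := hg12.sub hg3
  rw [integral_congr_ae hae, integral_sub hg123 hg4,
    integral_sub hg12 hg3, integral_add hg1 hg2, hI1, hI2, hI3, hI4]
  simp only [copulaEntropy]
  ring
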